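/- Let N ≥ 1, let F be an N×N complex Hermitian matrix such that I_N − F is invertible, and set G = (I_N − F)⁻¹ − (1/2)·I_N. Then G is positive definite if and only if the spectral norm of F is strictly less than 1. -/

import Mathlib

open scoped Matrix.Norms.L2Operator ComplexOrder
open Matrix

lemma aux_real (t : ℝ) (ht : t ≠ 1) : 0 < (1 - t)⁻¹ - 1 / 2 ↔ |t| < 1 := by
  rw [abs_lt]
  rcases ht.lt_or_gt with h | h
  · have h0 : 0 < 1 - t := by linarith
    rw [sub_pos]
    rw [show (1:ℝ)/2 = 2⁻¹ by norm_num, inv_lt_inv₀ (by norm_num) (by linarith)]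
    constructor
    · intro h'; exact ⟨by linarith, h⟩
    · intro h'; linarith [h'.1]
  · have h0 : 1 - t < 0 := by linarith
    have : (1 - t)⁻¹ < 0 := inv_neg''.mpr h0
    constructor
    · intro h'; linarith
    · intro h'; linarith [h'.2]

lemma aux_conj_posdef {N : ℕ} {V A : Matrix (Fin N) (Fin N) ℂ}
    (h1 : V * star V = 1) (hA : A.PosDef) :
    (V * A * star V).PosDef := by
  rw [Matrix.posDef_iff_dotProduct_mulVec]
  constructor
  · have := hA.1
    simp only [Matrix.IsHermitian, Matrix.star_eq_conjTranspose] at *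
    simp [Matrix.conjTranspose_mul, this, mul_assoc]
  · intro x hx
    have key : star x ⬝ᵥ (V * A * star V) *ᵥ x
        = star ((star V) *ᵥ x) ⬝ᵥ A *ᵥ ((star V) *ᵥ x) := by
      rw [Matrix.star_mulVec, Matrix.star_eq_conjTranspose, Matrix.conjTranspose_conjTranspose]
      rw [← Matrix.mulVec_mulVec, ← Matrix.mulVec_mulVec, Matrix.dotProduct_mulVec]
    rw [key]
    apply hA.dotProduct_mulVec_pos
    intro h0
    apply hx
    have : V *ᵥ ((star V) *ᵥ x) = x := by
      rw [Matrix.mulVec_mulVec, h1, Matrix.one_mulVec]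
    rw [← this, h0, Matrix.mulVec_zero]

lemma aux_le_diag {N : ℕ} (d : Fin N → ℂ) (i : Fin N) : ‖d i‖ ≤ ‖Matrix.diagonal d‖ := by
  have h := Matrix.l2_opNorm_mulVec (Matrix.diagonal d) (EuclideanSpace.single i 1)
  have hx : ‖(EuclideanSpace.single i (1:ℂ) : EuclideanSpace ℂ (Fin N))‖ = 1 := by
    simp [EuclideanSpace.norm_single]
  rw [hx, mul_one] at h
  refine le_trans ?_ h
  have hmv : (Matrix.diagonal d) *ᵥ (EuclideanSpace.single i (1:ℂ) : EuclideanSpace ℂ (Fin N))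
      = (Pi.single i (d i) : Fin N → ℂ) := by
    rw [show ((EuclideanSpace.single i (1:ℂ) : EuclideanSpace ℂ (Fin N)) : Fin N → ℂ)
        = Pi.single i 1 from rfl]
    rw [Matrix.diagonal_mulVec_single]
    simp
  rw [hmv]
  rw [show (EuclideanSpace.equiv (Fin N) ℂ).symm (Pi.single i (d i) : Fin N → ℂ)
      = EuclideanSpace.single i (d i) from rfl]
  rw [EuclideanSpace.norm_single]

lemma aux_diag_le {N : ℕ} (d : Fin N → ℂ) {c : ℝ} (hc : 0 ≤ c) (h : ∀ i, ‖d i‖ ≤ c) :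
    ‖Matrix.diagonal d‖ ≤ c := by
  rw [Matrix.l2_opNorm_def]
  apply ContinuousLinearMap.opNorm_le_bound _ hc
  intro x
  have hj : ∀ j, (Matrix.toEuclideanLin (Matrix.diagonal d) x) j = d j * x j := by
    intro j
    rw [Matrix.toEuclideanLin_apply]
    simp [Matrix.mulVec_diagonal]
  rw [LinearEquiv.trans_apply, LinearMap.coe_toContinuousLinearMap']
  rw [EuclideanSpace.norm_eq, EuclideanSpace.norm_eq]
  rw [show c = Real.sqrt (c^2) from (Real.sqrt_sq hc).symm]
  rw [← Real.sqrt_mul (by positivity)]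
  apply Real.sqrt_le_sqrt
  rw [Finset.mul_sum]
  apply Finset.sum_le_sum
  intro j _
  rw [hj, norm_mul, mul_pow]
  exact mul_le_mul_of_nonneg_right (pow_le_pow_left₀ (norm_nonneg _) (h j) 2) (sq_nonneg _)

lemma aux_conj_conj {N : ℕ} {V A B : Matrix (Fin N) (Fin N) ℂ}
    (h2 : star V * V = 1) :
    (V * A * star V) * (V * B * star V) = V * (A * B) * star V := by
  rw [show (V * A * star V) * (V * B * star V) = (V * A) * (star V * V) * (B * star V) by
    simp only [mul_assoc], h2, mul_one]
  simp only [mul_assoc]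

theorem stmt_0 (N : ℕ) (hN : 1 ≤ N) (F : Matrix (Fin N) (Fin N) ℂ)
    (hF : F.IsHermitian) (hInv : IsUnit (1 - F))
    (G : Matrix (Fin N) (Fin N) ℂ)
    (hG : G = (1 - F)⁻¹ - (1 / 2 : ℂ) • 1) :
    G.PosDef ↔ ‖F‖ < 1 := by
  have hne : Nonempty (Fin N) := Fin.pos_iff_nonempty.mp hN
  set U := hF.eigenvectorUnitary with hU
  set V : Matrix (Fin N) (Fin N) ℂ := (U : Matrix (Fin N) (Fin N) ℂ) with hVdef
  set μ : Fin N → ℝ := hF.eigenvalues with hμ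
  set d : Fin N → ℂ := RCLike.ofReal ∘ μ with hd
  set g : Fin N → ℂ := fun i => (1 - d i)⁻¹ - 1/2 with hg
  have hV1 : V * star V = 1 := Unitary.coe_mul_star_self U
  have hV2 : star V * V = 1 := Unitary.coe_star_mul_self U
  have hFd : F = V * Matrix.diagonal d * star V := hF.spectral_theorem
  -- 1 - F
  have h1F : 1 - F = V * Matrix.diagonal (fun i => 1 - d i) * star V := by
    have hD : Matrix.diagonal (fun i => 1 - d i)
        = (1 : Matrix (Fin N) (Fin N) ℂ) - Matrix.diagonal d := by
      rw [← Matrix.diagonal_one, ← Matrix.diagonal_sub]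
    rw [hD, mul_sub, sub_mul, mul_one, hV1, hFd]
  -- entries nonzero
  have hdet : ∀ i, (1 : ℂ) - d i ≠ 0 := by
    intro i h0
    have h1 : IsUnit (1 - F).det := (Matrix.isUnit_iff_isUnit_det _).mp hInv
    rw [h1F, Matrix.det_mul, Matrix.det_mul, Matrix.det_diagonal] at h1
    apply h1.ne_zero
    rw [Finset.prod_eq_zero (Finset.mem_univ i) h0]
    ring
  -- inverse
  have hinv : (1 - F)⁻¹ = V * Matrix.diagonal (fun i => (1 - d i)⁻¹) * star V := by
    apply Matrix.inv_eq_right_inv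
    rw [h1F, aux_conj_conj hV2, Matrix.diagonal_mul_diagonal]
    rw [show (fun i => (1 - d i) * (1 - d i)⁻¹) = fun _ : Fin N => (1:ℂ) from
      funext fun i => mul_inv_cancel₀ (hdet i), Matrix.diagonal_one, mul_one, hV1]
  -- G diagonalized
  have hGd : G = V * Matrix.diagonal g * star V := by
    have hDg : Matrix.diagonal g
        = Matrix.diagonal (fun i => (1 - d i)⁻¹) - (1/2 : ℂ) • (1 : Matrix (Fin N) (Fin N) ℂ) := by
      ext i j
      rcases eq_or_ne i j with rfl | hij
      · simp [Matrix.diagonal_apply_eq, Matrix.one_apply_eq, hg]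
      · simp [Matrix.diagonal_apply_ne _ hij, Matrix.one_apply_ne hij]
    rw [hG, hinv, hDg, mul_sub, sub_mul]
    congr 1
    rw [Matrix.mul_smul, Matrix.smul_mul, mul_one, hV1]
  -- PosDef iff diagonal entries positive
  have hpos : G.PosDef ↔ ∀ i, 0 < g i := by
    constructor
    · intro h
      have h' : ((star V) * G * star (star V)).PosDef := by
        refine aux_conj_posdef ?_ h
        rw [star_star]; exact hV2
      rw [hGd, star_star] at h'
      have e : star V * (V * Matrix.diagonal g * star V) * V = Matrix.diagonal g := by
        simp only [← mul_assoc]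
        rw [hV2, one_mul, mul_assoc, hV2, mul_one]
      rw [e] at h'
      exact Matrix.posDef_diagonal_iff.mp h'
    · intro h
      rw [hGd]
      exact aux_conj_posdef hV1 (Matrix.PosDef.diagonal h)
  -- norm
  have hnorm : ‖F‖ = ‖Matrix.diagonal d‖ := by
    rw [hFd, CStarRing.norm_mul_mem_unitary _ (Unitary.star_mem U.prop),
      CStarRing.norm_mem_unitary_mul _ U.prop]
  have hdabs : ∀ i, ‖d i‖ = |μ i| := by
    intro i
    simp [hd]
  have hFn : ‖F‖ < 1 ↔ ∀ i, |μ i| < 1 := by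
    rw [hnorm]
    constructor
    · intro h i
      have h2 := aux_le_diag d i
      rw [hdabs i] at h2
      linarith
    · intro h
      have hune : (Finset.univ : Finset (Fin N)).Nonempty := Finset.univ_nonempty
      set c := Finset.univ.sup' hune (fun i => ‖d i‖) with hc
      have hcb : ∀ i, ‖d i‖ ≤ c := fun i =>
        Finset.le_sup' (fun j => ‖d j‖) (Finset.mem_univ i)
      have hc0 : 0 ≤ c := le_trans (norm_nonneg (d hne.some)) (hcb _)
      have hc1 : c < 1 := by
        rw [hc, Finset.sup'_lt_iff]
        intro i _
        rw [hdabs i]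
        exact h i
      exact lt_of_le_of_lt (aux_diag_le d hc0 hcb) hc1
  -- entrywise equivalence
  have hgi : ∀ i, (0 < g i ↔ |μ i| < 1) := by
    intro i
    have hne1 : μ i ≠ 1 := by
      intro h0
      apply hdet i
      simp [hd, h0]
    have hgr : g i = (((1 - μ i)⁻¹ - 1/2 : ℝ) : ℂ) := by
      simp only [hg, hd, Function.comp_apply]
      push_cast
      ring_nf
      rfl
    rw [hgr, Complex.zero_lt_real]
    exact aux_real (μ i) hne1
  rw [hpos, hFn]
  exact forall_congr' hgi
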